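/- Let a be a positive integer, b an integer coprime to a, b' an integer with b·b' ≡ 1 (mod a), and γ an integer. Then, as complex numbers, s(b, a; (γ + b/2)/a, 1/2) + (1/2)·(((b'·γ + 1/2)/a)) = −λ(b, a; γ). -/

import Mathlib

open scoped BigOperators

/-- The sawtooth function `((x))`: `x - ⌊x⌋ - 1/2` if `x` is not an integer, `0` otherwise. -/
noncomputable def sawtooth (x : ℝ) : ℝ :=
  if Int.fract x = 0 then 0 else Int.fract x - 1/2

/-- The Dedekind–Rademacher sum `s(b, a; x, y)`. -/
noncomputable def drSum (b : ℤ) (a : ℕ) (x y : ℝ) : ℝ :=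
  ∑ j ∈ Finset.range a, sawtooth (x + b * ((j : ℝ) + y) / a) * sawtooth (((j : ℝ) + y) / a)

/-- `λ(b, a; n) = (1/a) ∑_{j=1}^{a-1} ω^{nj} / ((1 - ω^{-j})(1 - ω^{-bj}))`,
where `ω = exp(2πi/a)`. -/
noncomputable def lamSum (b : ℤ) (a : ℕ) (n : ℤ) : ℂ :=
  (1 / (a : ℂ)) * ∑ j ∈ Finset.Ioo 0 a,
    Complex.exp (2 * Real.pi * Complex.I / a) ^ (n * (j : ℤ)) /
      ((1 - Complex.exp (2 * Real.pi * Complex.I / a) ^ (-(j : ℤ))) *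
       (1 - Complex.exp (2 * Real.pi * Complex.I / a) ^ (-(b * (j : ℤ)))))


open Finset

lemma sawtooth_add_int (x : ℝ) (n : ℤ) : sawtooth (x + n) = sawtooth x := by
  unfold sawtooth; rw [Int.fract_add_intCast]


lemma sum_cast_range (n : ℕ) : (∑ i ∈ range n, (i:ℂ)) * 2 = n * ((n:ℂ) - 1) := by
  induction n with
  | zero => simp
  | succ n ih => rw [Finset.sum_range_succ]; push_cast; ring_nf; ring_nf at ih; linear_combination ih


section OmegaAux
variable {a : ℕ} {ω : ℂ}

lemma zpow_congr' (hω0 : ω ≠ 0) (hωa : ω ^ (a:ℤ) = 1) {m n : ℤ} (h : (a:ℤ) ∣ m - n) :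
    ω ^ m = ω ^ n := by
  obtain ⟨k, hk⟩ := h
  have hm : m = n + a * k := by linarith
  rw [hm, zpow_add₀ hω0, zpow_mul, hωa, one_zpow, mul_one]


lemma sum_ind' (ha : 0 < a) (hω : IsPrimitiveRoot ω a) (n : ℤ) :
    ∑ k ∈ range a, ω ^ (n * (k:ℤ)) = if (a:ℤ) ∣ n then (a:ℂ) else 0 := by
  have hω0 : ω ≠ 0 := hω.ne_zero ha.ne'
  have hpow : ∀ k : ℕ, ω ^ (n * (k:ℤ)) = (ω ^ n) ^ k := by
    intro k; rw [zpow_mul, zpow_natCast]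
  rw [Finset.sum_congr rfl fun k _ => hpow k]
  by_cases h : (a:ℤ) ∣ n
  · rw [if_pos h, (hω.zpow_eq_one_iff_dvd n).mpr h]; simp
  · rw [if_neg h, geom_sum_eq (fun h1 => h ((hω.zpow_eq_one_iff_dvd n).mp h1))]
    have h1 : (ω ^ n) ^ a = 1 := by
      rw [← zpow_natCast (ω ^ n), ← zpow_mul, mul_comm, zpow_mul, zpow_natCast, hω.pow_eq_one,
        one_zpow]
    rw [h1]; simp


lemma sum_k_zpow' (z : ℂ) (hz : z ^ a = 1) (h1 : z ≠ 1) :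
    ∑ k ∈ range a, (k:ℂ) * z ^ k = a / (z - 1) := by
  have hz1 : z - 1 ≠ 0 := sub_ne_zero.mpr h1
  have hgeom : ∑ k ∈ range a, z ^ k = 0 := by
    rw [geom_sum_eq h1, hz]; simp
  have htel : ∑ k ∈ range a, (((k:ℂ)+1) * z ^ (k+1) - (k:ℂ) * z ^ k) = a * z ^ a - 0 := by
    have := Finset.sum_range_sub (fun k => (k:ℂ) * z ^ k) a
    simpa using this
  have hsplit : ∀ k : ℕ, ((k:ℂ)+1) * z ^ (k+1) - (k:ℂ) * z ^ k
      = (z - 1) * ((k:ℂ) * z ^ k) + z * z ^ k := by intro k; ring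
  rw [Finset.sum_congr rfl fun k _ => hsplit k, Finset.sum_add_distrib, ← Finset.mul_sum,
    ← Finset.mul_sum, hgeom, mul_zero, add_zero, hz] at htel
  field_simp
  linear_combination htel

lemma dft' (ha : 0 < a) (hω : IsPrimitiveRoot ω a) (F : ℕ → ℂ) {r : ℕ} (hr : r < a) :
    ∑ l ∈ range a, (∑ n ∈ range a, F n * ω ^ (-(n:ℤ) * (l:ℤ))) * ω ^ ((r:ℤ) * (l:ℤ))
      = a * F r := by
  have hω0 : ω ≠ 0 := hω.ne_zero ha.ne'
  have step1 : ∀ l : ℕ, (∑ n ∈ range a, F n * ω ^ (-(n:ℤ) * (l:ℤ))) * ω ^ ((r:ℤ) * (l:ℤ))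
      = ∑ n ∈ range a, F n * ω ^ (((r:ℤ) - (n:ℤ)) * (l:ℤ)) := by
    intro l
    rw [Finset.sum_mul]
    refine Finset.sum_congr rfl fun n _ => ?_
    rw [mul_assoc, ← zpow_add₀ hω0]
    congr 1
    ring
  rw [Finset.sum_congr rfl fun l _ => step1 l, Finset.sum_comm]
  have step2 : ∀ n : ℕ, ∑ l ∈ range a, F n * ω ^ (((r:ℤ) - (n:ℤ)) * (l:ℤ))
      = F n * (if (a:ℤ) ∣ ((r:ℤ) - (n:ℤ)) then (a:ℂ) else 0) := by
    intro n
    rw [← Finset.mul_sum, sum_ind' ha hω]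
  rw [Finset.sum_congr rfl fun n _ => step2 n]
  rw [Finset.sum_eq_single_of_mem r (Finset.mem_range.mpr hr)]
  · rw [if_pos (by simp)]; ring
  · intro n hn hne
    rw [if_neg, mul_zero]
    intro hdvd
    have hn' := Finset.mem_range.mp hn
    have h1 : (a:ℤ) ∣ |(r:ℤ) - n| := (dvd_abs _ _).mpr hdvd
    have h2 : 0 < |(r:ℤ) - n| := abs_pos.mpr (by omega)
    have h3 := Int.le_of_dvd h2 h1
    have h4 : |(r:ℤ) - n| < a := by rw [abs_sub_lt_iff]; omega
    omega

-- z-facts for l ∈ Ioo 0 a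
lemma z_facts' (ha : 0 < a) (hω : IsPrimitiveRoot ω a) {l : ℕ} (hl : l ∈ Ioo 0 a) :
    (ω ^ (-(l:ℤ))) ^ a = 1 ∧ ω ^ (-(l:ℤ)) ≠ 1 ∧
      (∀ n : ℕ, ω ^ (-(n:ℤ) * (l:ℤ)) = (ω ^ (-(l:ℤ))) ^ n) := by
  obtain ⟨hl0, hla⟩ := Finset.mem_Ioo.mp hl
  refine ⟨?_, ?_, ?_⟩
  · rw [← zpow_natCast (ω ^ (-(l:ℤ))), ← zpow_mul]
    have : (-(l:ℤ)) * a = (a:ℤ) * (-(l:ℤ)) := by ring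
    rw [this, zpow_mul, zpow_natCast, hω.pow_eq_one, one_zpow]
  · intro h
    have := (hω.zpow_eq_one_iff_dvd _).mp h
    rw [dvd_neg, Int.natCast_dvd_natCast] at this
    have := Nat.le_of_dvd hl0 this
    omega
  · intro n
    rw [← zpow_natCast (ω ^ (-(l:ℤ))), ← zpow_mul]
    congr 1; ring


lemma coeffB' (ha : 0 < a) (hω : IsPrimitiveRoot ω a) {l : ℕ} (hl : l ∈ Ioo 0 a) :
    ∑ n ∈ range a, (((n:ℂ)+1/2)/a - 1/2) * ω ^ (-(n:ℤ) * (l:ℤ))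
      = 1/(ω ^ (-(l:ℤ)) - 1) := by
  have ha0 : (a:ℂ) ≠ 0 := Nat.cast_ne_zero.mpr ha.ne'
  obtain ⟨hza, hz1, hzn⟩ := z_facts' ha hω hl
  set z := ω ^ (-(l:ℤ)) with hzdef
  have hgeom : ∑ n ∈ range a, z ^ n = 0 := by
    rw [geom_sum_eq hz1, hza]; simp
  have hF : ∀ n : ℕ, (((n:ℂ)+1/2)/a - 1/2) * ω ^ (-(n:ℤ) * (l:ℤ))
      = (1/a) * ((n:ℂ) * z ^ n) + (1/(2*a) - 1/2) * z ^ n := by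
    intro n; rw [hzn n]; field_simp; ring
  rw [Finset.sum_congr rfl fun n _ => hF n, Finset.sum_add_distrib, ← Finset.mul_sum,
    ← Finset.mul_sum, hgeom, mul_zero, add_zero, sum_k_zpow' z hza hz1]
  have hz0 : z - 1 ≠ 0 := sub_ne_zero.mpr hz1
  field_simp

lemma coeffB0' (ha : 0 < a) : ∑ n ∈ range a, (((n:ℂ)+1/2)/a - 1/2) = 0 := by
  have ha0 : (a:ℂ) ≠ 0 := Nat.cast_ne_zero.mpr ha.ne'
  have hg := sum_cast_range a
  have hF : ∀ n : ℕ, (((n:ℂ)+1/2)/a - 1/2) = (n:ℂ) * (1/a) + (1/(2*a) - 1/2) := by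
    intro n; field_simp; ring
  rw [Finset.sum_congr rfl fun n _ => hF n, Finset.sum_add_distrib, ← Finset.sum_mul,
    Finset.sum_const, Finset.card_range]
  field_simp
  linear_combination (1/2:ℂ) * hg + (((a:ℂ) - (a:ℂ)^2)/2) * mul_inv_cancel₀ ha0

lemma coeffA' (ha : 0 < a) (hω : IsPrimitiveRoot ω a) {l : ℕ} (hl : l ∈ Ioo 0 a) :
    ∑ n ∈ range a, (if n = 0 then 0 else (n:ℂ)/a - 1/2) * ω ^ (-(n:ℤ) * (l:ℤ))
      = 1/(ω ^ (-(l:ℤ)) - 1) + 1/2 := by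
  have ha0 : (a:ℂ) ≠ 0 := Nat.cast_ne_zero.mpr ha.ne'
  obtain ⟨hza, hz1, hzn⟩ := z_facts' ha hω hl
  set z := ω ^ (-(l:ℤ)) with hzdef
  have hgeom : ∑ n ∈ range a, z ^ n = 0 := by
    rw [geom_sum_eq hz1, hza]; simp
  have hF : ∀ n : ℕ, (if n = 0 then (0:ℂ) else (n:ℂ)/a - 1/2) * ω ^ (-(n:ℤ) * (l:ℤ))
      = (1/a) * ((n:ℂ) * z ^ n) + (-(1/2)) * z ^ n + (if n = 0 then (1/2 : ℂ) else 0) := by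
    intro n
    rw [hzn n]
    rcases Nat.eq_zero_or_pos n with h | h
    · subst h; simp
    · rw [if_neg h.ne', if_neg h.ne']; field_simp; ring
  rw [Finset.sum_congr rfl fun n _ => hF n, Finset.sum_add_distrib, Finset.sum_add_distrib,
    ← Finset.mul_sum, ← Finset.mul_sum, hgeom, mul_zero, add_zero, sum_k_zpow' z hza hz1,
    Finset.sum_ite_eq' (range a) 0 (fun _ => (1/2 : ℂ)), if_pos (Finset.mem_range.mpr ha)]
  have hz0 : z - 1 ≠ 0 := sub_ne_zero.mpr hz1
  field_simp

lemma coeffA0' (ha : 0 < a) : ∑ n ∈ range a, (if n = 0 then (0:ℂ) else (n:ℂ)/a - 1/2) = 0 := by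
  have ha0 : (a:ℂ) ≠ 0 := Nat.cast_ne_zero.mpr ha.ne'
  have hg := sum_cast_range a
  have hF : ∀ n : ℕ, (if n = 0 then (0:ℂ) else (n:ℂ)/a - 1/2)
      = (n:ℂ) * (1/a) + (-(1/2)) + (if n = 0 then (1/2:ℂ) else 0) := by
    intro n
    rcases Nat.eq_zero_or_pos n with h | h
    · subst h; simp
    · rw [if_neg h.ne', if_neg h.ne']; field_simp; ring
  rw [Finset.sum_congr rfl fun n _ => hF n, Finset.sum_add_distrib, Finset.sum_add_distrib,
    ← Finset.sum_mul, Finset.sum_const, Finset.card_range,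
    Finset.sum_ite_eq' (range a) 0 (fun _ => (1/2 : ℂ)), if_pos (Finset.mem_range.mpr ha)]
  field_simp
  linear_combination (1:ℂ) * hg


-- reduction of an integer mod a
lemma red_facts (ha : 0 < a) (m : ℤ) :
    ∃ r : ℕ, r < a ∧ m = r + a * (m / a) := by
  have haz : (0:ℤ) < a := by exact_mod_cast ha
  refine ⟨(m % a).toNat, ?_, ?_⟩
  · have h1 := Int.emod_lt_of_pos m haz
    have h2 := Int.emod_nonneg m haz.ne'
    omega
  · have h2 := Int.emod_nonneg m (by exact_mod_cast ha.ne' : (a:ℤ) ≠ 0)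
    have h3 := Int.mul_ediv_add_emod m a
    omega

lemma sum_range_eq_Ioo (ha : 0 < a) (f : ℕ → ℂ) :
    ∑ l ∈ range a, f l = f 0 + ∑ l ∈ Ioo 0 a, f l := by
  rw [Finset.range_eq_Ico, ← Finset.Ioo_insert_left ha, Finset.sum_insert (by simp)]

lemma expB' (ha : 0 < a) (hω : IsPrimitiveRoot ω a) (m : ℤ) :
    ((sawtooth (((m:ℝ)+1/2)/a) : ℝ) : ℂ)
      = (1/a) * ∑ l ∈ Ioo 0 a, ω ^ (m * (l:ℤ)) * (1/(ω ^ (-(l:ℤ)) - 1)) := by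
  have hω0 : ω ≠ 0 := hω.ne_zero ha.ne'
  have hωa : ω ^ (a:ℤ) = 1 := by rw [zpow_natCast, hω.pow_eq_one]
  have ha0 : (a:ℂ) ≠ 0 := Nat.cast_ne_zero.mpr ha.ne'
  have haR : (a:ℝ) ≠ 0 := Nat.cast_ne_zero.mpr ha.ne'
  obtain ⟨r, hrlt, hq⟩ := red_facts ha m
  -- LHS
  have harg : ((m:ℝ)+1/2)/a = ((r:ℝ)+1/2)/a + ((m / a : ℤ) : ℝ) := by
    conv_lhs => rw [hq]
    push_cast; field_simp; ring
  have hst : sawtooth (((r:ℝ)+1/2)/a) = ((r:ℝ)+1/2)/a - 1/2 := by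
    unfold sawtooth
    have hpos : 0 < ((r:ℝ)+1/2)/a := by positivity
    have h1 : ((r:ℝ)+1/2)/a < 1 := by
      rw [div_lt_one (by positivity)]
      have : (r:ℝ) + 1 ≤ a := by exact_mod_cast hrlt
      linarith
    rw [Int.fract_eq_self.mpr ⟨hpos.le, h1⟩, if_neg hpos.ne']
  rw [harg, sawtooth_add_int, hst]
  -- RHS: reduce exponent
  have hdvd : (a:ℤ) ∣ m - r := ⟨m / a, by omega⟩
  have hRW : ∀ l ∈ Ioo 0 a, ω ^ (m * (l:ℤ)) * (1/(ω ^ (-(l:ℤ)) - 1))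
      = (∑ n ∈ range a, (((n:ℂ)+1/2)/a - 1/2) * ω ^ (-(n:ℤ) * (l:ℤ))) * ω ^ ((r:ℤ) * (l:ℤ)) := by
    intro l hl
    rw [coeffB' ha hω hl, mul_comm]
    congr 1
    refine zpow_congr' hω0 hωa ?_
    rw [show m * (l:ℤ) - (r:ℤ) * l = (m - r) * l by ring]
    exact hdvd.mul_right _
  rw [Finset.sum_congr rfl hRW]
  have hfull := sum_range_eq_Ioo ha
    (fun l => (∑ n ∈ range a, (((n:ℂ)+1/2)/a - 1/2) * ω ^ (-(n:ℤ) * (l:ℤ))) * ω ^ ((r:ℤ) * (l:ℤ)))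
  have hzero : (∑ n ∈ range a, (((n:ℂ)+1/2)/a - 1/2) * ω ^ (-(n:ℤ) * ((0:ℕ):ℤ))) * ω ^ ((r:ℤ) * ((0:ℕ):ℤ)) = 0 := by
    simp only [Nat.cast_zero, mul_zero, zpow_zero, mul_one]
    exact coeffB0' ha
  have hd := dft' ha hω (fun n => ((n:ℂ)+1/2)/a - 1/2) hrlt
  rw [hfull, hzero, zero_add] at hd
  rw [hd]
  beta_reduce
  push_cast
  field_simp

lemma expA' (ha : 0 < a) (hω : IsPrimitiveRoot ω a) (m : ℤ) :
    ((sawtooth ((m:ℝ)/a) : ℝ) : ℂ)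
      = (1/a) * ∑ l ∈ Ioo 0 a, ω ^ (m * (l:ℤ)) * (1/(ω ^ (-(l:ℤ)) - 1) + 1/2) := by
  have hω0 : ω ≠ 0 := hω.ne_zero ha.ne'
  have hωa : ω ^ (a:ℤ) = 1 := by rw [zpow_natCast, hω.pow_eq_one]
  have ha0 : (a:ℂ) ≠ 0 := Nat.cast_ne_zero.mpr ha.ne'
  have haR : (a:ℝ) ≠ 0 := Nat.cast_ne_zero.mpr ha.ne'
  obtain ⟨r, hrlt, hq⟩ := red_facts ha m
  have harg : (m:ℝ)/a = (r:ℝ)/a + ((m / a : ℤ) : ℝ) := by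
    conv_lhs => rw [hq]
    push_cast; field_simp
  have hst : sawtooth ((r:ℝ)/a) = if r = 0 then 0 else (r:ℝ)/a - 1/2 := by
    unfold sawtooth
    rcases Nat.eq_zero_or_pos r with h | h
    · subst h; simp
    · have hpos : 0 < (r:ℝ)/a := by positivity
      have h1 : (r:ℝ)/a < 1 := by
        rw [div_lt_one (by positivity)]
        exact_mod_cast hrlt
      rw [Int.fract_eq_self.mpr ⟨hpos.le, h1⟩, if_neg hpos.ne', if_neg h.ne']
  rw [harg, sawtooth_add_int, hst]
  have hdvd : (a:ℤ) ∣ m - r := ⟨m / a, by omega⟩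
  have hRW : ∀ l ∈ Ioo 0 a, ω ^ (m * (l:ℤ)) * (1/(ω ^ (-(l:ℤ)) - 1) + 1/2)
      = (∑ n ∈ range a, (if n = 0 then 0 else (n:ℂ)/a - 1/2) * ω ^ (-(n:ℤ) * (l:ℤ))) * ω ^ ((r:ℤ) * (l:ℤ)) := by
    intro l hl
    rw [coeffA' ha hω hl, mul_comm]
    congr 1
    refine zpow_congr' hω0 hωa ?_
    rw [show m * (l:ℤ) - (r:ℤ) * l = (m - r) * l by ring]
    exact hdvd.mul_right _
  rw [Finset.sum_congr rfl hRW]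
  have hfull := sum_range_eq_Ioo ha
    (fun l => (∑ n ∈ range a, (if n = 0 then 0 else (n:ℂ)/a - 1/2) * ω ^ (-(n:ℤ) * (l:ℤ))) * ω ^ ((r:ℤ) * (l:ℤ)))
  have hzero : (∑ n ∈ range a, (if n = 0 then 0 else (n:ℂ)/a - 1/2) * ω ^ (-(n:ℤ) * ((0:ℕ):ℤ))) * ω ^ ((r:ℤ) * ((0:ℕ):ℤ)) = 0 := by
    simp only [Nat.cast_zero, mul_zero, zpow_zero, mul_one]
    exact coeffA0' ha
  have hd := dft' ha hω (fun n => if n = 0 then 0 else (n:ℂ)/a - 1/2) hrlt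
  rw [hfull, hzero, zero_add] at hd
  rw [hd]
  beta_reduce
  rcases Nat.eq_zero_or_pos r with h | h
  · subst h; simp
  · rw [if_neg h.ne', if_neg h.ne']
    push_cast
    field_simp


end OmegaAux

lemma not_dvd_sub' (a : ℕ) {i j : ℕ} (hi : i < a) (hj : j < a) (hne : i ≠ j) :
    ¬ (a:ℤ) ∣ (i:ℤ) - j := by
  intro h
  have h1 : (a:ℤ) ∣ |(i:ℤ) - j| := (dvd_abs _ _).mpr h
  have h2 : 0 < |(i:ℤ) - j| := abs_pos.mpr (by omega)
  have h3 := Int.le_of_dvd h2 h1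
  have h4 : |(i:ℤ) - j| < a := by rw [abs_sub_lt_iff]; omega
  omega

lemma hres' {a : ℕ} (ha : 0 < a) (t : ℤ) (ht : ¬ (a:ℤ) ∣ t) :
    (t % a).toNat ∈ Ioo 0 a ∧ (a:ℤ) ∣ t - ((t % a).toNat : ℤ) := by
  have haz : (0:ℤ) < a := by exact_mod_cast ha
  have h1 := Int.emod_nonneg t haz.ne'
  have h2 := Int.emod_lt_of_pos t haz
  have h3 : t % a ≠ 0 := fun h => ht (Int.dvd_of_emod_eq_zero h)
  have h4 := Int.mul_ediv_add_emod t a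
  refine ⟨Finset.mem_Ioo.mpr (by omega), ⟨t / a, by omega⟩⟩

lemma hnd' {a : ℕ} (ha : 0 < a) {c : ℤ} (hc : IsCoprime c (a:ℤ)) {l : ℕ} (hl : l ∈ Ioo 0 a) :
    ¬ (a:ℤ) ∣ c * (l:ℤ) := by
  intro h
  obtain ⟨hl0, hla⟩ := Finset.mem_Ioo.mp hl
  have h2 : (a:ℤ) ∣ (l:ℤ) := hc.symm.dvd_of_dvd_mul_left h
  have h3 := Int.le_of_dvd (by exact_mod_cast hl0) h2
  omega


lemma hinv' {a : ℕ} (ha : 0 < a) {c c' : ℤ} (h : (a:ℤ) ∣ c * c' - 1) {l : ℕ} (hl : l ∈ Ioo 0 a)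
    (hnd : ¬ (a:ℤ) ∣ c' * (l:ℤ)) : ((c * ((((c' * (l:ℤ)) % a).toNat : ℕ) : ℤ)) % a).toNat = l := by
  obtain ⟨hmem, hdvd⟩ := hres' ha _ hnd
  obtain ⟨k1, hk1⟩ := hdvd
  obtain ⟨k2, hk2⟩ := h
  have hdd : (a:ℤ) ∣ c * (((c' * (l:ℤ)) % a).toNat : ℤ) - l :=
    ⟨k2 * l - c * k1, by linear_combination (l:ℤ) * hk2 - c * hk1⟩
  obtain ⟨q, hq⟩ := hdd
  obtain ⟨hl0, hla⟩ := Finset.mem_Ioo.mp hl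
  have key : (c * ((((c' * (l:ℤ)) % a).toNat : ℕ) : ℤ)) % a = (l:ℤ) := by
    rw [show c * ((((c' * (l:ℤ)) % a).toNat : ℕ) : ℤ) = (l:ℤ) + (a:ℤ) * q by linarith,
      Int.add_mul_emod_self_left, Int.emod_eq_of_lt (by positivity) (by exact_mod_cast hla)]
  omega

set_option maxHeartbeats 1000000 in
theorem dr_sum_plus_sawtooth_eq_neg_lam (a : ℕ) (ha : 0 < a) (b b' γ : ℤ)
    (hb : Int.gcd b a = 1) (hbb' : b * b' ≡ 1 [ZMOD (a : ℤ)]) :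
    ((drSum b a (((γ : ℝ) + (b : ℝ) / 2) / a) (1/2)
        + (1/2) * sawtooth (((b' : ℝ) * (γ : ℝ) + 1/2) / a) : ℝ) : ℂ)
      = - lamSum b a γ := by
  have hane : a ≠ 0 := ha.ne'
  have haz : (0:ℤ) < (a:ℤ) := by exact_mod_cast ha
  rw [lamSum]
  set ω : ℂ := Complex.exp (2 * Real.pi * Complex.I / a) with hwdef
  clear_value ω
  have hω : IsPrimitiveRoot ω a := by rw [hwdef]; exact Complex.isPrimitiveRoot_exp a hane
  have hω0 : ω ≠ 0 := hω.ne_zero hane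
  have hωa : ω ^ (a:ℤ) = 1 := by rw [zpow_natCast, hω.pow_eq_one]
  have ha0 : (a:ℂ) ≠ 0 := Nat.cast_ne_zero.mpr hane
  have haR : (a:ℝ) ≠ 0 := Nat.cast_ne_zero.mpr hane
  have hcb : IsCoprime (b:ℤ) (a:ℤ) := Int.isCoprime_iff_gcd_eq_one.mpr hb
  have hd1 : (a:ℤ) ∣ b * b' - 1 := by
    obtain ⟨k, hk⟩ := hbb'.dvd
    exact ⟨-k, by linarith⟩
  have hcb' : IsCoprime (b':ℤ) (a:ℤ) := by
    obtain ⟨k, hk⟩ := hd1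
    exact ⟨b, -k, by linarith⟩
  -- Step 1 : rewrite drSum arguments
  have hdr : drSum b a (((γ:ℝ) + (b:ℝ)/2)/a) (1/2)
      = ∑ j ∈ range a, sawtooth ((((γ + b*((j:ℤ)+1) : ℤ)) : ℝ)/a) * sawtooth (((((j:ℤ)):ℝ)+1/2)/a) := by
    rw [drSum]
    refine Finset.sum_congr rfl fun j hj => ?_
    have e1 : (((γ:ℝ) + (b:ℝ)/2)/a) + (b:ℝ) * ((j:ℝ) + 1/2)/(a:ℝ)
        = (((γ + b*((j:ℤ)+1) : ℤ)) : ℝ)/a := by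
      push_cast
      field_simp
      ring
    have e2 : (((j:ℝ) + 1/2)/(a:ℝ)) = ((((j:ℤ)):ℝ)+1/2)/a := by
      push_cast
      try ring
    rw [e1, e2]
  have hL1 : ((drSum b a (((γ:ℝ) + (b:ℝ)/2)/a) (1/2) : ℝ) : ℂ)
      = ∑ j ∈ range a, (((1:ℂ)/a) * ∑ l ∈ Ioo 0 a,
            ω ^ ((γ + b*((j:ℤ)+1)) * (l:ℤ)) * (1/(ω^(-(l:ℤ)) - 1) + 1/2))
          * (((1:ℂ)/a) * ∑ i ∈ Ioo 0 a, ω ^ ((j:ℤ) * (i:ℤ)) * (1/(ω^(-(i:ℤ)) - 1))) := by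
    rw [hdr, Complex.ofReal_sum]
    refine Finset.sum_congr rfl fun j hj => ?_
    rw [Complex.ofReal_mul, expA' ha hω (γ + b*((j:ℤ)+1)), expB' ha hω ((j:ℤ))]
  -- Step 2 : expand the product of sums
  have hsplit : ∀ j : ℕ, (((1:ℂ)/a) * ∑ l ∈ Ioo 0 a,
            ω ^ ((γ + b*((j:ℤ)+1)) * (l:ℤ)) * (1/(ω^(-(l:ℤ)) - 1) + 1/2))
          * (((1:ℂ)/a) * ∑ i ∈ Ioo 0 a, ω ^ ((j:ℤ) * (i:ℤ)) * (1/(ω^(-(i:ℤ)) - 1)))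
      = ∑ l ∈ Ioo 0 a, ∑ i ∈ Ioo 0 a, ((1:ℂ)/a) * (1/a) *
          ((ω ^ ((γ + b) * (l:ℤ)) * (1/(ω^(-(l:ℤ)) - 1) + 1/2) * (1/(ω^(-(i:ℤ)) - 1)))
            * ω ^ ((b*(l:ℤ) + (i:ℤ)) * (j:ℤ))) := by
    intro j
    rw [mul_mul_mul_comm, Finset.sum_mul_sum, Finset.mul_sum]
    refine Finset.sum_congr rfl fun l _ => ?_
    rw [Finset.mul_sum]
    refine Finset.sum_congr rfl fun i _ => ?_
    have hx : ω ^ ((γ + b*((j:ℤ)+1)) * (l:ℤ)) * ω ^ ((j:ℤ) * (i:ℤ))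
        = ω ^ ((γ + b) * (l:ℤ)) * ω ^ ((b*(l:ℤ) + (i:ℤ)) * (j:ℤ)) := by
      rw [← zpow_add₀ hω0, ← zpow_add₀ hω0]
      congr 1
      ring
    linear_combination ((1:ℂ)/a) * (1/a) * (1/(ω^(-(l:ℤ)) - 1) + 1/2)
      * (1/(ω^(-(i:ℤ)) - 1)) * hx
  -- Step 3 : orthogonality
  have hL2 : (∑ j ∈ range a, (((1:ℂ)/a) * ∑ l ∈ Ioo 0 a,
            ω ^ ((γ + b*((j:ℤ)+1)) * (l:ℤ)) * (1/(ω^(-(l:ℤ)) - 1) + 1/2))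
          * (((1:ℂ)/a) * ∑ i ∈ Ioo 0 a, ω ^ ((j:ℤ) * (i:ℤ)) * (1/(ω^(-(i:ℤ)) - 1))))
      = ∑ l ∈ Ioo 0 a, ((1:ℂ)/a) *
          (ω ^ ((γ + b) * (l:ℤ)) * (1/(ω^(-(l:ℤ)) - 1) + 1/2) * (1/(ω^(b*(l:ℤ)) - 1))) := by
    rw [Finset.sum_congr rfl fun j _ => hsplit j, Finset.sum_comm]
    refine Finset.sum_congr rfl fun l hl => ?_
    rw [Finset.sum_comm]
    have hstep : ∀ i : ℕ, (∑ j ∈ range a, ((1:ℂ)/a) * (1/a) *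
          ((ω ^ ((γ + b) * (l:ℤ)) * (1/(ω^(-(l:ℤ)) - 1) + 1/2) * (1/(ω^(-(i:ℤ)) - 1)))
            * ω ^ ((b*(l:ℤ) + (i:ℤ)) * (j:ℤ))))
        = ((1:ℂ)/a) * (1/a) *
          ((ω ^ ((γ + b) * (l:ℤ)) * (1/(ω^(-(l:ℤ)) - 1) + 1/2) * (1/(ω^(-(i:ℤ)) - 1)))
            * (if (a:ℤ) ∣ (b*(l:ℤ) + (i:ℤ)) then (a:ℂ) else 0)) := by
      intro i
      rw [← Finset.mul_sum, ← Finset.mul_sum, sum_ind' ha hω]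
    rw [Finset.sum_congr rfl fun i _ => hstep i]
    have hnd1 : ¬ (a:ℤ) ∣ -(b*(l:ℤ)) := by
      rw [dvd_neg]
      exact hnd' ha hcb hl
    obtain ⟨hi0mem, hi0dvd⟩ := hres' ha _ hnd1
    set i₀ := ((-(b*(l:ℤ))) % a).toNat with hi0def
    have hpos : (a:ℤ) ∣ b*(l:ℤ) + (i₀:ℤ) := by
      obtain ⟨k, hk⟩ := hi0dvd
      exact ⟨-k, by linarith⟩
    rw [Finset.sum_eq_single_of_mem i₀ hi0mem ?side]
    case side =>
      intro i hi hne
      have hneq : ¬ (a:ℤ) ∣ b*(l:ℤ) + (i:ℤ) := by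
        intro hdd
        have h3 : (a:ℤ) ∣ (i:ℤ) - (i₀:ℤ) := by
          obtain ⟨k1, hk1⟩ := hdd
          obtain ⟨k2, hk2⟩ := hpos
          exact ⟨k1 - k2, by linarith⟩
        exact not_dvd_sub' a (Finset.mem_Ioo.mp hi).2 (Finset.mem_Ioo.mp hi0mem).2 hne h3
      rw [if_neg hneq, mul_zero, mul_zero]
    rw [if_pos hpos]
    have hdi : ω^(-(i₀:ℤ)) = ω^(b*(l:ℤ)) := by
      refine zpow_congr' hω0 hωa ?_
      obtain ⟨k, hk⟩ := hpos
      exact ⟨-k, by linarith⟩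
    rw [hdi]
    set x1 := ω ^ ((γ + b) * (l:ℤ)) with hx1def
    set x2 := ω ^ (-(l:ℤ)) with hx2def
    set x3 := ω ^ (b*(l:ℤ)) with hx3def
    have d2 : x3 - 1 ≠ 0 := by
      refine sub_ne_zero.mpr fun h => hnd' ha hcb hl ((hω.zpow_eq_one_iff_dvd _).mp h)
    field_simp
  -- Step 4 : algebra per term
  have field_id : ∀ (u v w : ℂ), v ≠ 0 → w ≠ 0 → v ≠ 1 → w ≠ 1 →
      ((1:ℂ)/a) * (u * v * (1/(w⁻¹ - 1) + 1/2) * (1/(v - 1)))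
        = -(((1:ℂ)/a) * (u / ((1 - w⁻¹) * (1 - v⁻¹)))) + ((1:ℂ)/(2*a)) * (u / (1 - v⁻¹)) := by
    intro u v w hv0 hw0 hv1 hw1
    have h2 : v - 1 ≠ 0 := sub_ne_zero.mpr hv1
    have h2' : w - 1 ≠ 0 := sub_ne_zero.mpr hw1
    have e1 : w⁻¹ - 1 = (1 - w)/w := by field_simp
    have e2 : 1 - w⁻¹ = (w - 1)/w := by field_simp
    have e3 : 1 - v⁻¹ = (v - 1)/v := by field_simp
    have h5 : (1:ℂ) - w ≠ 0 := fun h => h2' (by linear_combination -h)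
    rw [e1, e2, e3]
    field_simp
    ring
  have halg : ∀ l ∈ Ioo 0 a, ((1:ℂ)/a) *
          (ω ^ ((γ + b) * (l:ℤ)) * (1/(ω^(-(l:ℤ)) - 1) + 1/2) * (1/(ω^(b*(l:ℤ)) - 1)))
      = -(((1:ℂ)/a) * (ω ^ (γ*(l:ℤ)) / ((1 - ω^(-(l:ℤ))) * (1 - ω^(-(b*(l:ℤ)))))))
        + ((1:ℂ)/(2*a)) * (ω ^ (γ*(l:ℤ)) / (1 - ω^(-(b*(l:ℤ))))) := by
    intro l hl
    have hndl : ¬ (a:ℤ) ∣ b*(l:ℤ) := hnd' ha hcb hl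
    have hndw : ¬ (a:ℤ) ∣ (l:ℤ) := by
      intro h
      obtain ⟨hl0, hla⟩ := Finset.mem_Ioo.mp hl
      have := Int.le_of_dvd (by exact_mod_cast hl0) h
      omega
    have hv1 : ω ^ (b*(l:ℤ)) ≠ 1 := fun h => hndl ((hω.zpow_eq_one_iff_dvd _).mp h)
    have hw1 : ω ^ ((l:ℤ)) ≠ 1 := fun h => hndw ((hω.zpow_eq_one_iff_dvd _).mp h)
    have hv0 : ω ^ (b*(l:ℤ)) ≠ 0 := zpow_ne_zero _ hω0
    have hw0 : ω ^ ((l:ℤ)) ≠ 0 := zpow_ne_zero _ hω0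
    have hx1 : ω ^ ((γ + b) * (l:ℤ)) = ω ^ (γ*(l:ℤ)) * ω ^ (b*(l:ℤ)) := by
      rw [← zpow_add₀ hω0]
      congr 1
      ring
    rw [hx1, zpow_neg ω (b*(l:ℤ)), zpow_neg ω ((l:ℤ))]
    exact field_id _ _ _ hv0 hw0 hv1 hw1
  -- Step 5 : reindex the residual sum
  have hre : ∑ l ∈ Ioo 0 a, ω ^ (γ*(l:ℤ)) / (1 - ω^(-(b*(l:ℤ))))
      = ∑ l ∈ Ioo 0 a, ω ^ ((b'*γ)*(l:ℤ)) / (1 - ω^(-(l:ℤ))) := by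
    refine Finset.sum_nbij' (fun l => ((b * (l:ℤ)) % a).toNat)
      (fun l => ((b' * (l:ℤ)) % a).toNat)
      (fun l hl => (hres' ha _ (hnd' ha hcb hl)).1)
      (fun l hl => (hres' ha _ (hnd' ha hcb' hl)).1)
      (fun l hl => hinv' ha (by obtain ⟨k,hk⟩ := hd1; exact ⟨k, by linarith⟩ : (a:ℤ) ∣ b' * b - 1) hl (hnd' ha hcb hl))
      (fun l hl => hinv' ha hd1 hl (hnd' ha hcb' hl))
      ?_
    intro l hl
    obtain ⟨hmem, hdvd⟩ := hres' ha _ (hnd' ha hcb hl)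
    congr 1
    · refine zpow_congr' hω0 hωa ?_
      obtain ⟨k1, hk1⟩ := hdvd
      obtain ⟨k2, hk2⟩ := hd1
      exact ⟨b' * γ * k1 - γ * l * k2, by linear_combination b' * γ * hk1 - γ * (l:ℤ) * hk2⟩
    · congr 1
      refine zpow_congr' hω0 hωa ?_
      obtain ⟨k1, hk1⟩ := hdvd
      exact ⟨-k1, by push_cast; linarith⟩
  -- Step 6 : evaluate the residual sum as a sawtooth value
  have hw2 : ((b':ℝ) * (γ:ℝ) + 1/2)/a = ((((b'*γ : ℤ)):ℝ)+1/2)/a := by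
    push_cast
    ring
  have hfin : ∑ l ∈ Ioo 0 a, ω ^ ((b'*γ)*(l:ℤ)) / (1 - ω^(-(l:ℤ)))
      = -((a:ℂ) * ((sawtooth (((((b'*γ : ℤ)):ℝ)+1/2)/a) : ℝ) : ℂ)) := by
    have hpt : ∀ l ∈ Ioo 0 a, ω ^ ((b'*γ)*(l:ℤ)) / (1 - ω^(-(l:ℤ)))
        = -(ω ^ ((b'*γ)*(l:ℤ)) * (1/(ω^(-(l:ℤ)) - 1))) := by
      intro l hl
      rw [show (1:ℂ) - ω^(-(l:ℤ)) = -(ω^(-(l:ℤ)) - 1) by ring, div_neg, div_eq_mul_one_div]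
    rw [Finset.sum_congr rfl hpt, Finset.sum_neg_distrib]
    have hE := expB' ha hω (b'*γ)
    rw [hE]
    field_simp
  -- Final assembly
  rw [Complex.ofReal_add, Complex.ofReal_mul, hw2, hL1, hL2, Finset.sum_congr rfl halg,
    Finset.sum_add_distrib, Finset.sum_neg_distrib, ← Finset.mul_sum, ← Finset.mul_sum,
    hre, hfin]
  push_cast
  field_simp
  ring
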